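/- Let G = SL(2,ℝ) with the standard Iwasawa decomposition (N upper unipotent, A positive diagonal, K = SO(2)). Then for every g ∈ G, the set {n(ga) : a ∈ A} ⊂ N of N-projections along the right A-orbit of g is bounded: the (1,2)-entry x of n(ga) satisfies a bound independent of a ∈ A. -/

import Mathlib

lemma key_aux (a b c d y : ℝ) (hdet : a * d - b * c = 1) (hy : 0 < y) :
    |(a * y * (c * y) + b * y⁻¹ * (d * y⁻¹)) / ((c * y) ^ 2 + (d * y⁻¹) ^ 2)| ≤ |a / c| + |b / d| := by
  have hy' : y ≠ 0 := ne_of_gt hy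
  by_cases hc : c = 0
  · have hd : d ≠ 0 := by intro h; rw [hc, h] at hdet; simp at hdet
    have : (a * y * (c * y) + b * y⁻¹ * (d * y⁻¹)) / ((c * y) ^ 2 + (d * y⁻¹) ^ 2) = b / d := by
      rw [hc]; field_simp; ring
    rw [this, hc]
    simp [abs_nonneg]
  · by_cases hd : d = 0
    · have : (a * y * (c * y) + b * y⁻¹ * (d * y⁻¹)) / ((c * y) ^ 2 + (d * y⁻¹) ^ 2) = a / c := by
        rw [hd]; field_simp; ring
      rw [this, hd]
      simp [abs_nonneg]
    · have hD : 0 < (c * y) ^ 2 + (d * y⁻¹) ^ 2 := by positivity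
      rw [abs_div, abs_of_pos hD, div_le_iff₀ hD]
      have h1 : |a * y * (c * y)| = |a / c| * (c * y) ^ 2 := by
        rw [show a * y * (c * y) = a * c * y ^ 2 by ring, abs_mul, abs_mul,
          abs_of_nonneg (sq_nonneg y), abs_div,
          show (c * y) ^ 2 = c ^ 2 * y ^ 2 by ring, ← sq_abs c]
        field_simp
      have h2 : |b * y⁻¹ * (d * y⁻¹)| = |b / d| * (d * y⁻¹) ^ 2 := by
        rw [show b * y⁻¹ * (d * y⁻¹) = b * d * (y⁻¹) ^ 2 by ring, abs_mul, abs_mul,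
          abs_of_nonneg (sq_nonneg y⁻¹), abs_div,
          show (d * y⁻¹) ^ 2 = d ^ 2 * (y⁻¹) ^ 2 by ring, ← sq_abs d]
        field_simp
      calc |a * y * (c * y) + b * y⁻¹ * (d * y⁻¹)|
          ≤ |a * y * (c * y)| + |b * y⁻¹ * (d * y⁻¹)| := abs_add_le _ _
        _ = |a / c| * (c * y) ^ 2 + |b / d| * (d * y⁻¹) ^ 2 := by rw [h1, h2]
        _ ≤ (|a / c| + |b / d|) * ((c * y) ^ 2 + (d * y⁻¹) ^ 2) := by nlinarith [abs_nonneg (a/c), abs_nonneg (b/d), sq_nonneg (c*y), sq_nonneg (d*y⁻¹)]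

theorem stmt_12 (g : Matrix.SpecialLinearGroup (Fin 2) ℝ) :
    ∃ C : ℝ, ∀ y : ℝ, 0 < y →
      |((g : Matrix (Fin 2) (Fin 2) ℝ) 0 0 * y * ((g : Matrix (Fin 2) (Fin 2) ℝ) 1 0 * y)
          + (g : Matrix (Fin 2) (Fin 2) ℝ) 0 1 * y⁻¹ * ((g : Matrix (Fin 2) (Fin 2) ℝ) 1 1 * y⁻¹))
        / (((g : Matrix (Fin 2) (Fin 2) ℝ) 1 0 * y) ^ 2
          + ((g : Matrix (Fin 2) (Fin 2) ℝ) 1 1 * y⁻¹) ^ 2)| ≤ C := by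
  have hdet : (g : Matrix (Fin 2) (Fin 2) ℝ) 0 0 * (g : Matrix (Fin 2) (Fin 2) ℝ) 1 1
      - (g : Matrix (Fin 2) (Fin 2) ℝ) 0 1 * (g : Matrix (Fin 2) (Fin 2) ℝ) 1 0 = 1 := by
    have := g.prop
    rwa [Matrix.det_fin_two] at this
  exact ⟨_, fun y hy => key_aux _ _ _ _ y hdet hy⟩
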